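/- Let φ be an automorphism of a finite group G and let N be a normal φ-invariant subgroup of G such that |C_{G/N}(φ)| = |C_G(φ)|, where C denotes the fixed-point subgroup of the (induced) automorphism. Then every element of N is a commutator with φ, that is, N ⊆ I_G(φ) = {g⁻¹ · φ(g) : g ∈ G}. -/

import Mathlib

/-- The fixed-point subgroup `C_G(φ)` of an automorphism `φ` of `G`. -/
def fixedSubgroup {G : Type*} [Group G] (φ : G ≃* G) : Subgroup G where
  carrier := {g | φ g = g}
  one_mem' := map_one φ
  mul_mem' := fun {a b} ha hb => by
    simp only [Set.mem_setOf_eq] at *; rw [map_mul, ha, hb]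
  inv_mem' := fun {a} ha => by
    simp only [Set.mem_setOf_eq] at *; rw [map_inv, ha]

lemma aux1 {G : Type*} [Group G] (φ : G ≃* G) :
    Nat.card (G ⧸ fixedSubgroup φ) = Nat.card (Set.range fun g : G => φ g * g⁻¹) := by
  apply Nat.card_congr
  have key : ∀ a b : G, a⁻¹ * b ∈ fixedSubgroup φ ↔ φ a * a⁻¹ = φ b * b⁻¹ := by
    intro a b
    constructor
    · intro hab
      have h1 : φ a⁻¹ * φ b = a⁻¹ * b := by
        rw [← map_mul]; exact hab
      have : φ b = φ a * (a⁻¹ * b) := by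
        rw [← h1, map_inv, ← mul_assoc, mul_inv_cancel, one_mul]
      rw [this]; group
    · intro hab
      show φ (a⁻¹ * b) = a⁻¹ * b
      have : φ b = φ a * a⁻¹ * b := by
        rw [hab]; group
      rw [map_mul, map_inv, this]; group
  refine Equiv.ofBijective
    (fun q => Quotient.liftOn' q (fun g => (⟨φ g * g⁻¹, g, rfl⟩ : Set.range fun g : G => φ g * g⁻¹))
      (fun a b hab => Subtype.ext ((key a b).1 (QuotientGroup.leftRel_apply.mp hab)))) ⟨?_, ?_⟩
  · intro q1 q2
    induction q1 using Quotient.inductionOn'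
    induction q2 using Quotient.inductionOn'
    intro hq
    exact Quotient.sound' (QuotientGroup.leftRel_apply.mpr ((key _ _).2 (congrArg Subtype.val hq)))
  · rintro ⟨-, g, rfl⟩
    exact ⟨QuotientGroup.mk g, rfl⟩


/-- If `N` is a normal φ-invariant subgroup with `|C_{G/N}(φ̄)| = |C_G(φ)|`,
then `N ⊆ I_G(φ)`. -/
theorem stmt_3 {G : Type*} [Group G] [Finite G] (φ : G ≃* G) (N : Subgroup G)
    [N.Normal] (hN : N.map φ.toMonoidHom = N)
    (h : Nat.card (fixedSubgroup (QuotientGroup.congr N N φ hN)) =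
      Nat.card (fixedSubgroup φ)) :
    ∀ x ∈ N, ∃ g : G, x = g⁻¹ * φ g := by
  set ψ := QuotientGroup.congr N N φ hN with hψ
  set R : Set G := Set.range fun g : G => φ g * g⁻¹ with hR
  set S : Set (G ⧸ N) := Set.range fun q : G ⧸ N => ψ q * q⁻¹ with hS
  set T : Set G := QuotientGroup.mk ⁻¹' S with hT
  have hRT : R ⊆ T := by
    rintro - ⟨g, rfl⟩
    refine ⟨QuotientGroup.mk g, ?_⟩
    simp [ψ]
    exact QuotientGroup.congr_mk N N φ hN g
  -- cardinalities
  have hcard1 : Nat.card R * Nat.card (fixedSubgroup φ) = Nat.card G := by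
    rw [← aux1, ← Subgroup.card_eq_card_quotient_mul_card_subgroup]
  have hcard2 : Nat.card S * Nat.card (fixedSubgroup ψ) = Nat.card (G ⧸ N) := by
    rw [← aux1, ← Subgroup.card_eq_card_quotient_mul_card_subgroup]
  have hT_card : Nat.card T = Nat.card N * Nat.card S :=
    (Nat.card_congr (QuotientGroup.preimageMkEquivSubgroupProdSet N S)).trans
      (Nat.card_prod _ _)
  have hGN : Nat.card (G ⧸ N) * Nat.card N = Nat.card G :=
    (Subgroup.card_eq_card_quotient_mul_card_subgroup N).symm
  have hCpos : 0 < Nat.card (fixedSubgroup φ) := Nat.card_pos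
  have hcards : Nat.card T = Nat.card R := by
    apply Nat.eq_of_mul_eq_mul_right hCpos
    rw [hcard1, hT_card, mul_assoc, ← h, hcard2, mul_comm, hGN]
  have hTfin : T.Finite := Set.toFinite T
  have hEq : R = T := by
    apply Set.eq_of_subset_of_ncard_le hRT _ hTfin
    rw [← Nat.card_coe_set_eq, ← Nat.card_coe_set_eq, hcards]
  intro x hx
  have hxT : x⁻¹ ∈ T := by
    show (QuotientGroup.mk x⁻¹ : G ⧸ N) ∈ S
    have : (QuotientGroup.mk x⁻¹ : G ⧸ N) = 1 := by
      rw [QuotientGroup.eq_one_iff]; exact inv_mem hx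
    rw [this]
    exact ⟨1, by simp⟩
  rw [← hEq] at hxT
  obtain ⟨g, hg⟩ := hxT
  refine ⟨g⁻¹, ?_⟩
  rw [map_inv]
  rw [← inv_inv x, ← hg]
  group
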